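/- Let (X,T) be a TDS with metric d and μ an ergodic T-invariant Borel probability measure. Then for every ε > 0, the upper Katok ε-entropy satisfies h̄_μ^K(T, 2ε) ≤ h̄_μ^{BK}(T, ε), where h̄_μ^K(T,2ε) = lim_{δ→0} limsup_n (1/n) log R_μ^δ(T,n,2ε). -/

import Mathlib

open MeasureTheory Filter Set Metric Topology ENNReal

variable {X : Type*} [MetricSpace X]

/-- The `n`-th Bowen metric `d_n(x,y) = max_{0 ≤ j ≤ n-1} d(T^j x, T^j y)`. -/
noncomputable def bowenDist (T : X → X) (n : ℕ) (x y : X) : ℝ :=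
  ⨆ j ∈ Finset.range n, dist (T^[j] x) (T^[j] y)

/-- The open Bowen ball of order `n` and radius `ε`. -/
def bowenBall (T : X → X) (n : ℕ) (x : X) (ε : ℝ) : Set X :=
  {y | bowenDist T n x y < ε}

/-- The closed Bowen ball of order `n` and radius `ε`. -/
def bowenClosedBall (T : X → X) (n : ℕ) (x : X) (ε : ℝ) : Set X :=
  {y | bowenDist T n x y ≤ ε}

/-- `F` is `(n,ε)`-separated. -/
def IsBowenSeparated (T : X → X) (n : ℕ) (ε : ℝ) (F : Set X) : Prop :=
  ∀ x ∈ F, ∀ y ∈ F, x ≠ y → ε < bowenDist T n x y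

/-- Maximal cardinality of an `(n,ε)`-separated subset of `Z`. -/
noncomputable def sepNum (T : X → X) (n : ℕ) (ε : ℝ) (Z : Set X) : ℕ :=
  sSup {k | ∃ F : Finset X, ↑F ⊆ Z ∧ IsBowenSeparated T n ε ↑F ∧ F.card = k}

/-- A finite Borel measurable partition of `X`. -/
def IsMeasPartition [MeasurableSpace X] (P : Finset (Set X)) : Prop :=
  (∀ A ∈ P, MeasurableSet A) ∧ (∀ A ∈ P, ∀ B ∈ P, A ≠ B → Disjoint A B) ∧
    (⋃ A ∈ P, A) = Set.univ

/-- A finite open cover of `X`. -/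
def IsOpenCover (U : Finset (Set X)) : Prop :=
  (∀ A ∈ U, IsOpen A) ∧ (⋃ A ∈ U, A) = Set.univ

/-- The `n`-th join `⋁_{j=0}^{n-1} T^{-j} P` of a finite family of sets. -/
noncomputable def joinPart (T : X → X) (P : Finset (Set X)) (n : ℕ) : Finset (Set X) := by
  classical
  exact (Fintype.piFinset (fun _ : Fin n => P)).image
    (fun f => ⋂ j : Fin n, T^[(j : ℕ)] ⁻¹' f j)

/-- Static entropy of a finite partition. -/
noncomputable def partEntropy [MeasurableSpace X] (μ : Measure X) (P : Finset (Set X)) : ℝ :=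
  ∑ A ∈ P, Real.negMulLog (μ A).toReal

/-- Kolmogorov–Sinai entropy of `T` w.r.t. the partition `P`. -/
noncomputable def ksEntropyPart [MeasurableSpace X] (T : X → X) (μ : Measure X)
    (P : Finset (Set X)) : ℝ :=
  limsup (fun n => partEntropy μ (joinPart T P n) / n) atTop

/-- Kolmogorov–Sinai entropy of `(X,T,μ)`. -/
noncomputable def ksEntropy [MeasurableSpace X] (T : X → X) (μ : Measure X) : ℝ≥0∞ :=
  ⨆ (P : Finset (Set X)) (_ : IsMeasPartition P), ENNReal.ofReal (ksEntropyPart T μ P)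

/-- `N_μ(V, c)`: the minimal cardinality of a subfamily of `V` whose union has
measure at least `c`. -/
noncomputable def coverNum [MeasurableSpace X] (μ : Measure X) (V : Finset (Set X)) (c : ℝ) : ℕ :=
  sInf {k | ∃ W : Finset (Set X), W ⊆ V ∧ W.card = k ∧ ENNReal.ofReal c ≤ μ (⋃ A ∈ W, A)}

/-- Shapira's entropy of the open cover `U` at level `δ`. -/
noncomputable def shapiraEnt [MeasurableSpace X] (T : X → X) (μ : Measure X)
    (U : Finset (Set X)) (δ : ℝ) : ℝ :=
  limsup (fun n => Real.log (coverNum μ (joinPart T U n) δ) / n) atTop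

/-- `R_μ^δ(T,n,ε)`: minimal number of Bowen `(n,ε)`-balls whose union has measure `> 1 - δ`. -/
noncomputable def katokCovNum [MeasurableSpace X] (T : X → X) (μ : Measure X) (n : ℕ)
    (ε δ : ℝ) : ℕ :=
  sInf {k | ∃ E : Finset X, E.card = k ∧
    1 - ENNReal.ofReal δ < μ (⋃ x ∈ E, bowenBall T n x ε)}

/-- Upper Katok `ε`-entropy at level `δ`. -/
noncomputable def katokUpperδ [MeasurableSpace X] (T : X → X) (μ : Measure X) (ε δ : ℝ) : ℝ≥0∞ :=
  limsup (fun n => ENNReal.ofReal (Real.log (katokCovNum T μ n ε δ)) / n) atTop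

/-- Lower Katok `ε`-entropy at level `δ`. -/
noncomputable def katokLowerδ [MeasurableSpace X] (T : X → X) (μ : Measure X) (ε δ : ℝ) : ℝ≥0∞ :=
  liminf (fun n => ENNReal.ofReal (Real.log (katokCovNum T μ n ε δ)) / n) atTop

/-- Upper Katok `ε`-entropy: the limit of `katokUpperδ` as `δ → 0`. -/
noncomputable def katokUpper [MeasurableSpace X] (T : X → X) (μ : Measure X) (ε : ℝ) : ℝ≥0∞ :=
  ⨆ δ ∈ Set.Ioo (0 : ℝ) 1, katokUpperδ T μ ε δ

/-- Lower Katok `ε`-entropy: the limit of `katokLowerδ` as `δ → 0`. -/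
noncomputable def katokLower [MeasurableSpace X] (T : X → X) (μ : Measure X) (ε : ℝ) : ℝ≥0∞ :=
  ⨆ δ ∈ Set.Ioo (0 : ℝ) 1, katokLowerδ T μ ε δ

/-- `-log μ(S)`, as an extended nonnegative real (`∞` when `μ S = 0`). -/
noncomputable def negLogMeas [MeasurableSpace X] (μ : Measure X) (S : Set X) : ℝ≥0∞ :=
  if μ S = 0 then ⊤ else ENNReal.ofReal (-Real.log (μ S).toReal)

/-- Upper Brin–Katok local `ε`-entropy of `μ`. -/
noncomputable def bkUpper [MeasurableSpace X] (T : X → X) (μ : Measure X) (ε : ℝ) : ℝ≥0∞ :=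
  ∫⁻ x, limsup (fun n => negLogMeas μ (bowenBall T n x ε) / n) atTop ∂μ

/-- Lower Brin–Katok local `ε`-entropy of `μ`. -/
noncomputable def bkLower [MeasurableSpace X] (T : X → X) (μ : Measure X) (ε : ℝ) : ℝ≥0∞ :=
  ∫⁻ x, liminf (fun n => negLogMeas μ (bowenBall T n x ε) / n) atTop ∂μ

/-- `∑ e^{-s n_i}` over a family of (center, order) pairs. -/
noncomputable def weightSum (s : ℝ) (I : Set (X × ℕ)) : ℝ≥0∞ :=
  ∑' p : I, ENNReal.ofReal (Real.exp (-(s * ((p : X × ℕ).2 : ℝ))))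

/-- Carathéodory–Pesin Bowen pre-measure `M(T,d,Z,s,N,ε)`. -/
noncomputable def bowenPre (T : X → X) (Z : Set X) (s : ℝ) (N : ℕ) (ε : ℝ) : ℝ≥0∞ :=
  ⨅ (I : Set (X × ℕ)) (_ : I.Countable ∧ (∀ p ∈ I, N ≤ p.2) ∧
      Z ⊆ ⋃ p ∈ I, bowenBall T p.2 p.1 ε), weightSum s I

/-- `M(T,d,Z,s,ε) = lim_{N→∞} M(T,d,Z,s,N,ε)`. -/
noncomputable def bowenCP (T : X → X) (Z : Set X) (s : ℝ) (ε : ℝ) : ℝ≥0∞ :=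
  ⨆ N, bowenPre T Z s N ε

/-- Bowen `ε`-entropy of the subset `Z`: the critical value of `s ↦ M(T,d,Z,s,ε)`. -/
noncomputable def bowenEnt (T : X → X) (Z : Set X) (ε : ℝ) : ℝ≥0∞ :=
  sInf {a : ℝ≥0∞ | ∃ s : ℝ, 0 ≤ s ∧ a = ENNReal.ofReal s ∧ bowenCP T Z s ε = 0}

/-- Packing pre-measure `P(T,d,Z,s,N,ε)`: supremum of `∑ e^{-n_i s}` over pairwise disjoint
families of closed Bowen balls with centers in `Z` and orders `≥ N`. -/
noncomputable def packPre (T : X → X) (Z : Set X) (s : ℝ) (N : ℕ) (ε : ℝ) : ℝ≥0∞ :=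
  ⨆ (I : Set (X × ℕ)) (_ : I.Countable ∧ (∀ p ∈ I, N ≤ p.2 ∧ p.1 ∈ Z) ∧
      I.PairwiseDisjoint (fun p => bowenClosedBall T p.2 p.1 ε)), weightSum s I

/-- `P(T,d,Z,s,ε) = lim_{N→∞} P(T,d,Z,s,N,ε)`. -/
noncomputable def packCP (T : X → X) (Z : Set X) (s : ℝ) (ε : ℝ) : ℝ≥0∞ :=
  ⨅ N, packPre T Z s N ε

/-- `𝒫(T,d,Z,s,ε) = inf {∑_i P(T,d,Z_i,s,ε) : Z ⊆ ⋃ Z_i}`. -/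
noncomputable def packOuter (T : X → X) (Z : Set X) (s : ℝ) (ε : ℝ) : ℝ≥0∞ :=
  ⨅ (Zs : ℕ → Set X) (_ : Z ⊆ ⋃ i, Zs i), ∑' i, packCP T (Zs i) s ε

/-- Packing `ε`-entropy of the subset `Z`: critical value of `s ↦ 𝒫(T,d,Z,s,ε)`. -/
noncomputable def packEnt (T : X → X) (Z : Set X) (ε : ℝ) : ℝ≥0∞ :=
  sInf {a : ℝ≥0∞ | ∃ s : ℝ, 0 ≤ s ∧ a = ENNReal.ofReal s ∧ packOuter T Z s ε = 0}

/-- Packing topological entropy of a subset: `lim_{ε → 0} h_top^P(T,Z,d,ε)`. -/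
noncomputable def packEntTotal (T : X → X) (Z : Set X) : ℝ≥0∞ :=
  ⨆ (ε : ℝ) (_ : 0 < ε), packEnt T Z ε

/-- Katok-type Bowen pre-measure `M^δ(T,d,μ,s,N,ε)` for a measure `μ`. -/
noncomputable def bowenPreMeas [MeasurableSpace X] (T : X → X) (μ : Measure X) (s : ℝ)
    (N : ℕ) (ε δ : ℝ) : ℝ≥0∞ :=
  ⨅ (I : Set (X × ℕ)) (_ : I.Countable ∧ (∀ p ∈ I, N ≤ p.2) ∧
      1 - ENNReal.ofReal δ < μ (⋃ p ∈ I, bowenBall T p.2 p.1 ε)), weightSum s I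

/-- The critical value `M^δ(T,d,μ,ε)`. -/
noncomputable def bowenEntMeasδ [MeasurableSpace X] (T : X → X) (μ : Measure X)
    (ε δ : ℝ) : ℝ≥0∞ :=
  sInf {a : ℝ≥0∞ | ∃ s : ℝ, 0 ≤ s ∧ a = ENNReal.ofReal s ∧
    (⨆ N, bowenPreMeas T μ s N ε δ) = 0}

/-- `M_μ(T,d,ε) = lim_{δ → 0} M^δ(T,d,μ,ε)`. -/
noncomputable def bowenEntMeas [MeasurableSpace X] (T : X → X) (μ : Measure X) (ε : ℝ) : ℝ≥0∞ :=
  ⨆ δ ∈ Set.Ioo (0 : ℝ) 1, bowenEntMeasδ T μ ε δ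

/-- `𝒫^δ(T,d,μ,s,ε) = inf {∑_i P(T,d,Z_i,s,ε) : μ(⋃ Z_i) > 1 - δ}`. -/
noncomputable def packOuterMeas [MeasurableSpace X] (T : X → X) (μ : Measure X) (s : ℝ)
    (ε δ : ℝ) : ℝ≥0∞ :=
  ⨅ (Zs : ℕ → Set X) (_ : 1 - ENNReal.ofReal δ < μ (⋃ i, Zs i)), ∑' i, packCP T (Zs i) s ε

/-- The critical value `𝒫^δ(T,d,μ,ε)`. -/
noncomputable def packEntMeasδ [MeasurableSpace X] (T : X → X) (μ : Measure X)
    (ε δ : ℝ) : ℝ≥0∞ :=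
  sInf {a : ℝ≥0∞ | ∃ s : ℝ, 0 ≤ s ∧ a = ENNReal.ofReal s ∧ packOuterMeas T μ s ε δ = 0}

/-- `𝒫_μ(T,d,ε) = lim_{δ → 0} 𝒫^δ(T,d,μ,ε)`. -/
noncomputable def packEntMeas [MeasurableSpace X] (T : X → X) (μ : Measure X) (ε : ℝ) : ℝ≥0∞ :=
  ⨆ δ ∈ Set.Ioo (0 : ℝ) 1, packEntMeasδ T μ ε δ

/-- The `n`-th empirical measure `(1/n) ∑_{j=0}^{n-1} δ_{T^j x}`. -/
noncomputable def empMeas [MeasurableSpace X] (T : X → X) (x : X) (n : ℕ) : Measure X :=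
  (n : ℝ≥0∞)⁻¹ • ∑ j ∈ Finset.range n, Measure.dirac (T^[j] x)

set_option linter.unusedSectionVars false in
lemma empMeas_finite [MeasurableSpace X] (T : X → X) (x : X) (n : ℕ) :
    IsFiniteMeasure (empMeas T x n) := by
  refine ⟨?_⟩
  have h : (∑ j ∈ Finset.range n, Measure.dirac (T^[j] x)) Set.univ = n := by
    rw [Measure.finset_sum_apply]
    simp
  rw [empMeas, Measure.smul_apply, smul_eq_mul, h]
  rcases eq_or_ne (n : ℝ≥0∞) 0 with h0 | h0
  · simp [h0]
  · rw [ENNReal.inv_mul_cancel h0 (by simp)]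
    exact ENNReal.one_lt_top

/-- The `n`-th empirical measure as a finite measure. -/
noncomputable def empFM [MeasurableSpace X] (T : X → X) (x : X) (n : ℕ) : FiniteMeasure X :=
  ⟨empMeas T x n, empMeas_finite T x n⟩

/-- The set of generic points of `μ`: points whose empirical measures converge weakly to `μ`. -/
def genPts [MeasurableSpace X] [OpensMeasurableSpace X] (T : X → X) (μ : Measure X) [IsFiniteMeasure μ] : Set X :=
  {x | Tendsto (fun n => empFM T x n) atTop (𝓝 (⟨μ, ‹_›⟩ : FiniteMeasure X))}

/-- `X_{n,F}`: points whose `n`-th empirical measure lies in `F`. -/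
def XnF [MeasurableSpace X] [OpensMeasurableSpace X] (T : X → X) (F : Set (FiniteMeasure X)) (n : ℕ) : Set X :=
  {x | empFM T x n ∈ F}

/-- Pfister–Sullivan `ε`-entropy of `μ`. -/
noncomputable def psEnt [MeasurableSpace X] [OpensMeasurableSpace X] (T : X → X) (μ : Measure X) [IsFiniteMeasure μ]
    (ε : ℝ) : ℝ≥0∞ :=
  ⨅ (F : Set (FiniteMeasure X)) (_ : F ∈ @nhds (FiniteMeasure X) _ ⟨μ, ‹_›⟩),
    limsup (fun n => ENNReal.ofReal (Real.log (sepNum T n ε (XnF T F n)) / n)) atTop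

/-- `limsup_{ε → 0⁺} f(ε)/log(1/ε)`. -/
noncomputable def mmUpper (f : ℝ → ℝ≥0∞) : ℝ≥0∞ :=
  limsup (fun ε : ℝ => f ε / ENNReal.ofReal (Real.log (1 / ε))) (𝓝[>] (0 : ℝ))

/-- `liminf_{ε → 0⁺} f(ε)/log(1/ε)`. -/
noncomputable def mmLower (f : ℝ → ℝ≥0∞) : ℝ≥0∞ :=
  liminf (fun ε : ℝ => f ε / ENNReal.ofReal (Real.log (1 / ε))) (𝓝[>] (0 : ℝ))

/-- Bowen upper metric mean dimension of a subset. -/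
noncomputable def mdimBUpper (T : X → X) (Z : Set X) : ℝ≥0∞ :=
  mmUpper (fun ε => bowenEnt T Z ε)

/-- Packing upper metric mean dimension of a subset. -/
noncomputable def mdimPUpper (T : X → X) (Z : Set X) : ℝ≥0∞ :=
  mmUpper (fun ε => packEnt T Z ε)

/-- Packing lower metric mean dimension of a subset. -/
noncomputable def mdimPLower (T : X → X) (Z : Set X) : ℝ≥0∞ :=
  mmLower (fun ε => packEnt T Z ε)

section auxSec
set_option linter.unusedSectionVars false

lemma bowenDist_eq_sup (T : X → X) (n : ℕ) (x y : X) :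
    bowenDist T n x y = ((Finset.range n).sup fun j => nndist (T^[j] x) (T^[j] y) : NNReal) := by
  unfold bowenDist
  set M : NNReal := (Finset.range n).sup fun j => nndist (T^[j] x) (T^[j] y) with hM
  have hub : ∀ j : ℕ, (⨆ _ : j ∈ Finset.range n, dist (T^[j] x) (T^[j] y)) ≤ (M : ℝ) := by
    intro j
    apply Real.iSup_le _ M.coe_nonneg
    intro hj
    rw [dist_nndist]
    exact_mod_cast Finset.le_sup (f := fun j => nndist (T^[j] x) (T^[j] y)) hj
  apply le_antisymm
  · exact Real.iSup_le hub M.coe_nonneg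
  · rcases Nat.eq_zero_or_pos n with rfl | hn
    · simp [hM]
    · obtain ⟨j₀, hj₀, hj₀e⟩ := Finset.exists_mem_eq_sup (Finset.range n)
        ⟨0, Finset.mem_range.2 hn⟩ fun j => nndist (T^[j] x) (T^[j] y)
      rw [hM, hj₀e]
      refine le_ciSup_of_le ⟨(M : ℝ), fun r hr => ?_⟩ j₀ ?_
      · obtain ⟨j, rfl⟩ := hr; exact hub j
      · rw [ciSup_pos hj₀, dist_nndist]

lemma bowenDist_lt_iff {T : X → X} {n : ℕ} {x y : X} {ε : ℝ} (hε : 0 < ε) :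
    bowenDist T n x y < ε ↔ ∀ j < n, dist (T^[j] x) (T^[j] y) < ε := by
  rw [bowenDist_eq_sup]
  obtain ⟨e, rfl⟩ : ∃ e : NNReal, (e : ℝ) = ε := ⟨ε.toNNReal, Real.coe_toNNReal ε hε.le⟩
  rw [NNReal.coe_lt_coe, Finset.sup_lt_iff (by exact_mod_cast hε : (⊥ : NNReal) < e)]
  constructor
  · intro h j hj
    rw [dist_nndist]
    exact_mod_cast h j (Finset.mem_range.2 hj)
  · intro h j hj
    have := h j (Finset.mem_range.1 hj)
    rw [dist_nndist] at this
    exact_mod_cast this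

lemma mem_bowenBall {T : X → X} {n : ℕ} {x y : X} {ε : ℝ} (hε : 0 < ε) :
    y ∈ bowenBall T n x ε ↔ ∀ j < n, dist (T^[j] x) (T^[j] y) < ε :=
  bowenDist_lt_iff hε

lemma bowenBall_eq {T : X → X} {n : ℕ} {x : X} {ε : ℝ} (hε : 0 < ε) :
    bowenBall T n x ε = ⋂ j ∈ Finset.range n, {y | dist (T^[j] x) (T^[j] y) < ε} := by
  ext y
  simp only [mem_bowenBall hε, Set.mem_iInter, Set.mem_setOf_eq, Finset.mem_range]

lemma isOpen_bowenBall {T : X → X} (hT : Continuous T) {n : ℕ} {x : X} {ε : ℝ} (hε : 0 < ε) :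
    IsOpen (bowenBall T n x ε) := by
  rw [bowenBall_eq hε]
  refine isOpen_biInter_finset fun j _ => ?_
  exact isOpen_lt (continuous_const.dist (hT.iterate j)) continuous_const


section meas
variable [CompactSpace X] [MeasurableSpace X] [BorelSpace X]
  {T : X → X} (μ : Measure X) [IsProbabilityMeasure μ]

lemma measurable_measure_bowenBall (hT : Continuous T) {n : ℕ} {ε : ℝ} (hε : 0 < ε) :
    Measurable fun x => μ (bowenBall T n x ε) := by
  have hs : MeasurableSet {p : X × X | ∀ j < n, dist (T^[j] p.1) (T^[j] p.2) < ε} := by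
    have : {p : X × X | ∀ j < n, dist (T^[j] p.1) (T^[j] p.2) < ε}
        = ⋂ j ∈ Finset.range n, {p : X × X | dist (T^[j] p.1) (T^[j] p.2) < ε} := by
      ext p; simp
    rw [this]
    refine (isOpen_biInter_finset fun j _ => ?_).measurableSet
    exact isOpen_lt (((hT.iterate j).comp continuous_fst).dist
      ((hT.iterate j).comp continuous_snd)) continuous_const
  have h2 := measurable_measure_prodMk_left (ν := μ) hs
  have heq : ∀ x, Prod.mk x ⁻¹' {p : X × X | ∀ j < n, dist (T^[j] p.1) (T^[j] p.2) < ε}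
      = bowenBall T n x ε := by
    intro x; ext y; simp [mem_bowenBall hε, Set.mem_preimage]
  simpa only [heq] using h2

lemma measurable_negLogMeas (hT : Continuous T) {n : ℕ} {ε : ℝ} (hε : 0 < ε) :
    Measurable fun x => negLogMeas μ (bowenBall T n x ε) := by
  have hF : Measurable fun t : ℝ≥0∞ => if t = 0 then (⊤ : ℝ≥0∞) else ENNReal.ofReal (-Real.log t.toReal) := by
    refine Measurable.ite (MeasurableSet.singleton 0) measurable_const ?_
    exact (measurable_neg.comp (Real.measurable_log.comp ENNReal.measurable_toReal)).ennreal_ofReal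
  exact hF.comp (measurable_measure_bowenBall μ hT hε)

end meas

lemma limsup_shift_le {b a : ℕ → ℝ≥0∞} (hab : ∀ n, b n ≤ a (n + 1)) :
    limsup (fun n => b n / n) atTop ≤ limsup (fun n => a n / n) atTop := by
  by_contra hcon
  push_neg at hcon
  obtain ⟨c, hc1, hc2⟩ := exists_between hcon
  have hcT : c ≠ ⊤ := (hc2.trans_le le_top).ne
  obtain ⟨d, hd1, hd2⟩ := exists_between hc2
  have hev : ∀ᶠ n : ℕ in atTop, a n / n < c := eventually_lt_of_limsup_lt hc1
  have hev2 : ∀ᶠ n : ℕ in atTop, c / (n : ℝ≥0∞) < d - c := by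
    have h0 : (0 : ℝ≥0∞) < d - c := tsub_pos_iff_lt.2 hd1
    have ht : Tendsto (fun n : ℕ => c / (n : ℝ≥0∞)) atTop (𝓝 (c / ⊤)) :=
      ENNReal.Tendsto.const_div ENNReal.tendsto_nat_nhds_top (Or.inr hcT)
    simp only [ENNReal.div_top] at ht
    exact ht.eventually_lt_const h0
  have hev' : ∀ᶠ n : ℕ in atTop, a (n + 1) / (((n + 1 : ℕ) : ℝ≥0∞)) < c :=
    (tendsto_add_atTop_nat 1).eventually hev
  have hev3 : ∀ᶠ n : ℕ in atTop, b n / n ≤ d := by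
    filter_upwards [hev2, hev', eventually_ge_atTop 1] with n h2 h1 hn1
    have hn0 : ((n : ℝ≥0∞)) ≠ 0 := Nat.cast_ne_zero.2 (by omega)
    have hnT : ((n : ℝ≥0∞)) ≠ ⊤ := ENNReal.natCast_ne_top n
    have ha1 : a (n + 1) < c * ((n + 1 : ℕ) : ℝ≥0∞) := by
      rw [← ENNReal.div_lt_iff (Or.inl (Nat.cast_ne_zero.2 (Nat.succ_ne_zero n)))
        (Or.inl (ENNReal.natCast_ne_top _))]
      exact h1
    have hb : b n ≤ c * (n : ℝ≥0∞) + c := by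
      refine (hab n).trans (ha1.le.trans ?_)
      push_cast
      rw [mul_add, mul_one]
    calc b n / n ≤ (c * (n : ℝ≥0∞) + c) / n := ENNReal.div_le_div_right hb _
      _ = c * ((n : ℝ≥0∞) / n) + c / n := by rw [ENNReal.add_div, mul_div_assoc]
      _ = c + c / n := by rw [ENNReal.div_self hn0 hnT, mul_one]
      _ ≤ c + (d - c) := add_le_add_right h2.le c
      _ = d := add_tsub_cancel_of_le hd1.le
  have hfin : limsup (fun n => b n / n) atTop ≤ d := limsup_le_of_le (by isBoundedDefault) hev3
  exact absurd hd2 (not_lt.2 hfin)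

lemma negLogMeas_anti [MeasurableSpace X] (μ : Measure X) {S S' : Set X} (hT' : μ S' ≠ ⊤)
    (h : μ S ≤ μ S') : negLogMeas μ S' ≤ negLogMeas μ S := by
  unfold negLogMeas
  rcases eq_or_ne (μ S) 0 with h0 | h0
  · simp [h0]
  · have h0' : μ S' ≠ 0 := fun hh => h0 (le_antisymm (le_trans h hh.le) zero_le)
    rw [if_neg h0, if_neg h0']
    apply ENNReal.ofReal_le_ofReal
    apply neg_le_neg
    exact Real.log_le_log (ENNReal.toReal_pos h0 ((h.trans_lt (lt_top_iff_ne_top.2 hT')).ne))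
      (ENNReal.toReal_mono hT' h)

section dyn
variable [CompactSpace X] [MeasurableSpace X] [BorelSpace X]
  {T : X → X} {μ : Measure X} [IsProbabilityMeasure μ]

lemma locEnt_comp_le (hT : Continuous T) (hμ : MeasurePreserving T μ μ) {ε : ℝ} (hε : 0 < ε)
    (x : X) :
    limsup (fun n => negLogMeas μ (bowenBall T n (T x) ε) / n) atTop ≤
      limsup (fun n => negLogMeas μ (bowenBall T n x ε) / n) atTop := by
  apply limsup_shift_le
  intro n
  apply negLogMeas_anti μ (measure_ne_top μ _)
  have hsub : bowenBall T (n + 1) x ε ⊆ T ⁻¹' bowenBall T n (T x) ε := by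
    intro y hy
    rw [Set.mem_preimage, mem_bowenBall hε]
    intro j hj
    rw [← Function.iterate_succ_apply, ← Function.iterate_succ_apply]
    exact (mem_bowenBall hε).1 hy (j + 1) (by omega)
  calc μ (bowenBall T (n + 1) x ε) ≤ μ (T ⁻¹' bowenBall T n (T x) ε) := measure_mono hsub
    _ = μ (bowenBall T n (T x) ε) :=
      hμ.measure_preimage (isOpen_bowenBall hT hε).measurableSet.nullMeasurableSet

end dyn

noncomputable def locEnt [MeasurableSpace X] (T : X → X) (μ : Measure X) (ε : ℝ) (x : X) : ℝ≥0∞ :=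
  limsup (fun n => negLogMeas μ (bowenBall T n x ε) / n) atTop

section dyn2
variable [CompactSpace X] [MeasurableSpace X] [BorelSpace X]
  {T : X → X} {μ : Measure X} [IsProbabilityMeasure μ]

lemma measurable_locEnt (hT : Continuous T) {ε : ℝ} (hε : 0 < ε) :
    Measurable (locEnt T μ ε) := by
  have : locEnt T μ ε = fun x => ⨅ N, ⨆ i, ⨆ (_ : i ≥ N), negLogMeas μ (bowenBall T i x ε) / i :=
    funext fun x => limsup_eq_iInf_iSup_of_nat
  rw [this]
  refine Measurable.iInf fun N => Measurable.iSup fun i => Measurable.iSup fun _ => ?_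
  simp only [div_eq_mul_inv]
  exact (measurable_negLogMeas μ hT hε).mul_const _

lemma essSup_locEnt_le (hT : Continuous T) (hμ : Ergodic T μ) {ε : ℝ} (hε : 0 < ε) :
    essSup (locEnt T μ ε) μ ≤ ∫⁻ x, locEnt T μ ε x ∂μ := by
  refine le_of_forall_lt_imp_le_of_dense fun d hd => ?_
  obtain ⟨d', hdd', hd'c⟩ := exists_between hd
  set A : Set X := {x | locEnt T μ ε x ≤ d'} with hA
  have hAm : MeasurableSet A := measurableSet_le (measurable_locEnt hT hε) measurable_const
  have hsub : A ⊆ T ⁻¹' A := fun x hx =>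
    le_trans (locEnt_comp_le hT hμ.toMeasurePreserving hε x) hx
  have hmeq : μ (T ⁻¹' A) = μ A :=
    hμ.toMeasurePreserving.measure_preimage hAm.nullMeasurableSet
  have haeeq : T ⁻¹' A =ᵐ[μ] A :=
    (ae_eq_of_subset_of_measure_ge hsub hmeq.le hAm.nullMeasurableSet (measure_ne_top μ _)).symm
  rcases hμ.quasiErgodic.ae_empty_or_univ₀ hAm.nullMeasurableSet haeeq with h | h
  · -- μ A = 0, so a.e. d' < locEnt
    have hzero : μ A = 0 := by
      have := measure_congr h; simpa using this
    have hae : ∀ᵐ x ∂μ, d' ≤ locEnt T μ ε x := by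
      have : ∀ᵐ x ∂μ, x ∉ A := by
        rw [ae_iff]; simpa using hzero
      filter_upwards [this] with x hx
      exact (not_le.1 hx).le
    calc d ≤ d' := hdd'.le
      _ = ∫⁻ _, d' ∂μ := by simp
      _ ≤ ∫⁻ x, locEnt T μ ε x ∂μ := lintegral_mono_ae hae
  · -- A a.e. univ : essSup ≤ d' < essSup, contradiction
    exfalso
    have hae : ∀ᵐ x ∂μ, locEnt T μ ε x ≤ d' := by
      have : ∀ᵐ x ∂μ, x ∈ A := Filter.eventuallyEq_univ.1 h
      filter_upwards [this] with x hx using hx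
    exact absurd (essSup_le_of_ae_le d' hae) (not_le.2 hd'c)

end dyn2

section cover
variable [CompactSpace X] [MeasurableSpace X] [BorelSpace X]
  {T : X → X} {μ : Measure X} [IsProbabilityMeasure μ]

lemma card_le_of_disjBalls (hT : Continuous T) {ε s : ℝ} (hε : 0 < ε) (n : ℕ)
    (F : Finset X)
    (hlow : ∀ x ∈ F, ENNReal.ofReal (Real.exp (-(s * n))) ≤ μ (bowenBall T n x ε))
    (hdisj : (F : Set X).Pairwise fun x y => Disjoint (bowenBall T n x ε) (bowenBall T n y ε)) :
    (F.card : ℝ) ≤ Real.exp (s * n) := by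
  have hmeas : μ (⋃ x ∈ F, bowenBall T n x ε) = ∑ x ∈ F, μ (bowenBall T n x ε) :=
    measure_biUnion_finset hdisj fun x _ => (isOpen_bowenBall hT hε).measurableSet
  have hsum : (F.card : ℝ≥0∞) * ENNReal.ofReal (Real.exp (-(s * n))) ≤ 1 := by
    calc (F.card : ℝ≥0∞) * ENNReal.ofReal (Real.exp (-(s * n)))
        = F.card • ENNReal.ofReal (Real.exp (-(s * n))) := by rw [nsmul_eq_mul]
      _ ≤ ∑ x ∈ F, μ (bowenBall T n x ε) := Finset.card_nsmul_le_sum F _ _ hlow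
      _ = μ (⋃ x ∈ F, bowenBall T n x ε) := hmeas.symm
      _ ≤ 1 := prob_le_one
  have h2 : (F.card : ℝ≥0∞) ≤ ENNReal.ofReal (Real.exp (s * n)) := by
    have := ENNReal.le_inv_iff_mul_le.2 hsum
    rwa [← ENNReal.ofReal_inv_of_pos (Real.exp_pos _), Real.exp_neg, inv_inv] at this
  rw [← ENNReal.ofReal_natCast] at h2
  exact (ENNReal.ofReal_le_ofReal_iff (Real.exp_pos _).le).1 h2

lemma exists_good_cover (hT : Continuous T) {ε s : ℝ} (hε : 0 < ε) (n : ℕ) (A : Set X)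
    (hA : ∀ x ∈ A, ENNReal.ofReal (Real.exp (-(s * n))) ≤ μ (bowenBall T n x ε)) :
    ∃ E : Finset X, A ⊆ (⋃ x ∈ E, bowenBall T n x (2 * ε)) ∧
      (E.card : ℝ) ≤ Real.exp (s * n) := by
  classical
  set P : Finset X → Prop := fun F => (F : Set X) ⊆ A ∧
    (F : Set X).Pairwise fun x y => Disjoint (bowenBall T n x ε) (bowenBall T n y ε) with hP
  have hbdd : ∀ F, P F → F.card ≤ ⌈Real.exp (s * n)⌉₊ := by
    intro F hF
    have := card_le_of_disjBalls hT hε n F (fun x hx => hA x (hF.1 hx)) hF.2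
    exact_mod_cast this.trans (Nat.le_ceil _)
  set C : Set ℕ := {k | ∃ F, P F ∧ F.card = k} with hC
  have hCne : C.Nonempty := ⟨0, ∅, ⟨by simp, by simp⟩, rfl⟩
  have hCbdd : BddAbove C := ⟨⌈Real.exp (s * n)⌉₊, fun k ⟨F, hF, hk⟩ => hk ▸ hbdd F hF⟩
  obtain ⟨F, hF, hFcard⟩ : ∃ F, P F ∧ F.card = sSup C := Nat.sSup_mem hCne hCbdd
  refine ⟨F, ?_, card_le_of_disjBalls hT hε n F (fun x hx => hA x (hF.1 hx)) hF.2⟩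
  intro z hz
  by_contra hzc
  simp only [Set.mem_iUnion, not_exists] at hzc
  have hznot : ∀ x ∈ F, ¬ (z ∈ bowenBall T n x (2 * ε)) := by
    intro x hx hmem
    exact hzc x hx hmem
  have hzF : z ∉ F := by
    intro hzF
    refine hznot z hzF ((mem_bowenBall (by linarith)).2 fun j _ => ?_)
    simp [hε]
  have hPz : P (insert z F) := by
    constructor
    · intro w hw
      rcases Finset.mem_insert.1 (by exact_mod_cast hw) with rfl | hw'
      · exact hz
      · exact hF.1 hw'
    · rw [Finset.coe_insert]
      refine Set.Pairwise.insert hF.2 fun x hx hxz => ?_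
      have hdis : Disjoint (bowenBall T n z ε) (bowenBall T n x ε) := by
        rw [Set.disjoint_left]
        intro w hw1 hw2
        refine hznot x hx ((mem_bowenBall (by linarith)).2 fun j hj => ?_)
        have h1 := (mem_bowenBall hε).1 hw1 j hj
        have h2 := (mem_bowenBall hε).1 hw2 j hj
        have := dist_triangle (T^[j] x) (T^[j] w) (T^[j] z)
        rw [dist_comm (T^[j] w) (T^[j] z)] at this
        linarith
      exact ⟨hdis, hdis.symm⟩
  have : (insert z F).card ≤ sSup C := le_csSup hCbdd ⟨insert z F, hPz, rfl⟩
  rw [Finset.card_insert_of_notMem hzF, hFcard] at this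
  omega

end cover

end auxSec

/-- `h̄_μ^K(T, 2ε) ≤ h̄_μ^{BK}(T, ε)` for ergodic `μ`. -/
theorem stmt_6 {X : Type*} [MetricSpace X] [CompactSpace X] [MeasurableSpace X] [BorelSpace X]
    (T : X → X) (hT : Continuous T) (μ : Measure X) [IsProbabilityMeasure μ]
    (hμ : Ergodic T μ) (ε : ℝ) (hε : 0 < ε) :
    katokUpper T μ (2 * ε) ≤ bkUpper T μ ε := by
  classical
  have hbk : bkUpper T μ ε = ∫⁻ x, locEnt T μ ε x ∂μ := rfl
  rw [hbk]
  refine le_trans ?_ (essSup_locEnt_le hT hμ hε)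
  rw [katokUpper]
  refine iSup₂_le fun δ hδ => ?_
  by_contra hcon
  push_neg at hcon
  obtain ⟨z, hz1, hz2⟩ := exists_between hcon
  have hzT : z ≠ ⊤ := (hz2.trans_le le_top).ne
  have hz0 : (0 : ℝ≥0∞) < z := lt_of_le_of_lt zero_le hz1
  set s : ℝ := z.toReal with hs
  have hspos : 0 < s := ENNReal.toReal_pos hz0.ne' hzT
  have hzofReal : ENNReal.ofReal s = z := ENNReal.ofReal_toReal hzT
  have hkey : katokUpperδ T μ (2 * ε) δ ≤ ENNReal.ofReal s := by
    set A : ℕ → Set X := fun N =>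
      {x | ∀ n : ℕ, N ≤ n → ENNReal.ofReal (Real.exp (-(s * n))) ≤ μ (bowenBall T n x ε)}
      with hA
    have hAmeas : ∀ N, MeasurableSet (A N) := by
      intro N
      have heq : A N = ⋂ (n : ℕ) (_ : N ≤ n),
          {x | ENNReal.ofReal (Real.exp (-(s * n))) ≤ μ (bowenBall T n x ε)} := by
        ext x; simp [hA]
      rw [heq]
      exact MeasurableSet.iInter fun n => MeasurableSet.iInter fun _ =>
        measurableSet_le measurable_const (measurable_measure_bowenBall μ hT hε)
    have hmono : Monotone A := fun N M hNM x hx n hn => hx n (hNM.trans hn)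
    have haecup : ∀ᵐ x ∂μ, x ∈ ⋃ N, A N := by
      filter_upwards [_root_.ae_le_essSup (f := locEnt T μ ε) (μ := μ)] with x hx
      have hlt : limsup (fun n => negLogMeas μ (bowenBall T n x ε) / n) atTop
          < ENNReal.ofReal s := lt_of_le_of_lt hx (by rw [hzofReal]; exact hz1)
      obtain ⟨N, hN⟩ := eventually_atTop.1 (eventually_lt_of_limsup_lt hlt)
      refine Set.mem_iUnion.2 ⟨max N 1, fun n hn => ?_⟩
      have hn1 : 1 ≤ n := le_trans (le_max_right _ _) hn
      have hNn := hN n (le_trans (le_max_left _ _) hn)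
      set t := μ (bowenBall T n x ε) with ht
      rcases eq_or_ne t 0 with ht0 | ht0
      · exfalso
        rw [negLogMeas, if_pos ht0, ENNReal.top_div_of_ne_top (ENNReal.natCast_ne_top n)]
          at hNn
        exact not_top_lt hNn
      · have htT : t ≠ ⊤ := measure_ne_top μ _
        have htpos : 0 < t.toReal := ENNReal.toReal_pos ht0 htT
        rw [negLogMeas, if_neg ht0, ENNReal.div_lt_iff
          (Or.inl (Nat.cast_ne_zero.2 (by omega))) (Or.inl (ENNReal.natCast_ne_top n))] at hNn
        have hsn : ENNReal.ofReal s * (n : ℝ≥0∞) = ENNReal.ofReal (s * n) := by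
          rw [ENNReal.ofReal_mul hspos.le, ENNReal.ofReal_natCast]
        rw [hsn] at hNn
        have hlt2 : -Real.log t.toReal < s * n :=
          (ENNReal.ofReal_lt_ofReal_iff (by positivity)).1 hNn
        have hexplt : Real.exp (-(s * n)) < t.toReal := by
          calc Real.exp (-(s * n)) < Real.exp (Real.log t.toReal) :=
              Real.exp_lt_exp.2 (by linarith)
            _ = t.toReal := Real.exp_log htpos
        calc ENNReal.ofReal (Real.exp (-(s * n))) ≤ ENNReal.ofReal t.toReal :=
            ENNReal.ofReal_le_ofReal hexplt.le
          _ = t := ENNReal.ofReal_toReal htT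
    have hcup : μ (⋃ N, A N) = 1 := by
      have h0 : μ ((⋃ N, A N)ᶜ) = 0 := by
        have h1 := ae_iff.1 haecup
        simp only [Set.compl_iUnion]
        convert h1 using 2
        ext a
        simp
      exact (prob_compl_eq_zero_iff (MeasurableSet.iUnion hAmeas)).1 h0
    have htend : Tendsto (fun N => μ (A N)) atTop (𝓝 1) := by
      have h2 := tendsto_measure_iUnion_atTop (μ := μ) hmono
      rwa [hcup] at h2
    have hδ1 : (1 : ℝ≥0∞) - ENNReal.ofReal δ < 1 :=
      ENNReal.sub_lt_self ENNReal.one_ne_top one_ne_zero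
        (fun h => absurd (ENNReal.ofReal_eq_zero.1 h) (not_le.2 hδ.1))
    obtain ⟨N₀, hN₀⟩ := (htend.eventually_const_lt hδ1).exists
    have hbound : ∀ n : ℕ, N₀ ≤ n →
        Real.log (katokCovNum T μ n (2 * ε) δ) ≤ s * n := by
      intro n hn
      obtain ⟨E, hEcov, hEcard⟩ := exists_good_cover hT hε n (A N₀) fun x hx => hx n hn
      have hK : katokCovNum T μ n (2 * ε) δ ≤ E.card :=
        Nat.sInf_le ⟨E, rfl, lt_of_lt_of_le hN₀ (measure_mono hEcov)⟩
      rcases Nat.eq_zero_or_pos (katokCovNum T μ n (2 * ε) δ) with h0 | hpos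
      · rw [h0]
        simp only [Nat.cast_zero, Real.log_zero]
        positivity
      · have h1 : (1 : ℝ) ≤ (katokCovNum T μ n (2 * ε) δ : ℝ) := by exact_mod_cast hpos
        calc Real.log (katokCovNum T μ n (2 * ε) δ)
            ≤ Real.log (Real.exp (s * n)) :=
              Real.log_le_log (by linarith) (le_trans (by exact_mod_cast hK) hEcard)
          _ = s * n := Real.log_exp _
    rw [katokUpperδ]
    refine limsup_le_of_le (by isBoundedDefault) ?_
    filter_upwards [eventually_ge_atTop N₀, eventually_ge_atTop 1] with n hn hn1
    rw [ENNReal.div_le_iff (Nat.cast_ne_zero.2 (by omega)) (ENNReal.natCast_ne_top n)]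
    calc ENNReal.ofReal (Real.log (katokCovNum T μ n (2 * ε) δ))
        ≤ ENNReal.ofReal (s * n) := ENNReal.ofReal_le_ofReal (hbound n hn)
      _ = ENNReal.ofReal s * n := by rw [ENNReal.ofReal_mul hspos.le, ENNReal.ofReal_natCast]
  exact absurd hz2 (not_lt.2 (hkey.trans hzofReal.le))
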